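/- arXiv:1803.05643 — 2 statements merged into one kernel-verified Lean document; each statement's English description precedes it below -/
import Mathlib

section
/- For every ε > 0 there exists a constant c = c(ε) > 0 such that every finite simple graph with N ≥ 2 vertices and at least (1+ε)·N edges contains a cycle of length at most c·log N. (Consequence of the Moore bound of Alon, Hoory and Linial.) -/
set_option linter.unusedSectionVars false

open Finset

namespace ShortCycleAux

variable {V : Type} [Fintype V] [DecidableEq V]

/-- The ball of radius `r` around `v` in `G`. -/
noncomputable def gball (G : SimpleGraph V) (v : V) (r : ℕ) : Finset V :=
  @Finset.filter V (fun u => G.Reachable v u ∧ G.dist v u ≤ r) (Classical.decPred _) Finset.univ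

lemma mem_gball {G : SimpleGraph V} {v u : V} {r : ℕ} :
    u ∈ gball G v r ↔ G.Reachable v u ∧ G.dist v u ≤ r := by
  classical
  simp [gball]

lemma self_mem_gball (G : SimpleGraph V) (v : V) (r : ℕ) : v ∈ gball G v r := by
  rw [mem_gball]
  exact ⟨SimpleGraph.Reachable.refl v, by simp [SimpleGraph.dist_self]⟩

lemma gball_mono {G : SimpleGraph V} {v : V} {r s : ℕ} (h : r ≤ s) :
    gball G v r ⊆ gball G v s := by
  intro u hu
  rw [mem_gball] at hu ⊢
  exact ⟨hu.1, hu.2.trans h⟩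

lemma dist_adj_le {G : SimpleGraph V} {v a b : V} (hr : G.Reachable v a) (h : G.Adj a b) :
    G.dist v b ≤ G.dist v a + 1 := by
  obtain ⟨p, hp⟩ := hr.exists_walk_length_eq_dist
  calc G.dist v b ≤ (p.concat h).length := SimpleGraph.dist_le _
    _ = G.dist v a + 1 := by rw [SimpleGraph.Walk.length_concat, hp]

/-- A vertex at least as far from `v` as `x` cannot lie on a shortest walk from `x` to `v`. -/
lemma not_mem_shortest {G : SimpleGraph V} {v x u : V} (p : G.Walk x v)
    (hp : p.length = G.dist x v) (hd : G.dist v x ≤ G.dist v u) (hne : u ≠ x) :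
    u ∉ p.support := by
  intro hu
  have h1 : G.dist x u + G.dist u v ≤ G.dist x v := by
    have hsp : (p.takeUntil u hu).append (p.dropUntil u hu) = p := p.take_spec hu
    have hlen : (p.takeUntil u hu).length + (p.dropUntil u hu).length = p.length := by
      have := congrArg SimpleGraph.Walk.length hsp
      rwa [SimpleGraph.Walk.length_append] at this
    calc G.dist x u + G.dist u v
        ≤ (p.takeUntil u hu).length + (p.dropUntil u hu).length :=
          Nat.add_le_add (SimpleGraph.dist_le _) (SimpleGraph.dist_le _)
      _ = G.dist x v := by rw [hlen, hp]
  have h2 : 1 ≤ G.dist x u := by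
    rcases Nat.eq_zero_or_pos (G.dist x u) with h | h
    · rcases SimpleGraph.dist_eq_zero_iff_eq_or_not_reachable.mp h with h' | h'
      · exact absurd h'.symm hne
      · exact absurd ⟨p.takeUntil u hu⟩ h'
    · exact h
  have h3 : G.dist x v ≤ G.dist u v := by
    rw [SimpleGraph.dist_comm] at hd ⊢
    rw [SimpleGraph.dist_comm (u := v) (v := u)] at hd
    omega
  omega

end ShortCycleAux
namespace ShortCycleAux
set_option linter.unusedSectionVars false

variable {V : Type} [Fintype V] [DecidableEq V]

open SimpleGraph

/-- Two edges from a "far" vertex `u` to closer vertices `x ≠ y` produce a short cycle. -/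
lemma cycle_of_two_edges {G : SimpleGraph V} {v u x y : V}
    (hux : G.Adj u x) (huy : G.Adj u y) (hxy : x ≠ y)
    (hrx : G.Reachable v x) (hry : G.Reachable v y)
    (hdx : G.dist v x ≤ G.dist v u) (hdy : G.dist v y ≤ G.dist v u) :
    ∃ w : G.Walk u u, w.IsCycle ∧ w.length ≤ G.dist v x + G.dist v y + 2 := by
  obtain ⟨p₁, hp₁⟩ := hrx.symm.exists_walk_length_eq_dist
  obtain ⟨p₂, hp₂⟩ := hry.exists_walk_length_eq_dist
  have hu1 : u ∉ p₁.support := not_mem_shortest p₁ hp₁ hdx hux.ne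
  have hu2 : u ∉ p₂.support := by
    have hrev : p₂.reverse.length = G.dist y v := by
      rw [SimpleGraph.Walk.length_reverse, hp₂, SimpleGraph.dist_comm]
    have := not_mem_shortest p₂.reverse hrev hdy huy.ne
    rwa [SimpleGraph.Walk.support_reverse, List.mem_reverse] at this
  set q : G.Walk x y := p₁.append p₂ with hq
  have huq : u ∉ q.support := by
    rw [hq, SimpleGraph.Walk.mem_support_append_iff]
    tauto
  set P : G.Walk x y := q.bypass with hP
  have hPpath : P.IsPath := q.bypass_isPath
  have huP : u ∉ P.support := fun h => huq (q.support_bypass_subset h)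
  have hPlen : P.length ≤ G.dist v x + G.dist v y + 0 := by
    have h1 : P.length ≤ q.length := q.length_bypass_le
    have h2 : q.length = G.dist x v + G.dist v y := by
      rw [hq, SimpleGraph.Walk.length_append, hp₁, hp₂]
    rw [SimpleGraph.dist_comm (u := x) (v := v)] at h2
    omega
  set R : G.Walk x u := P.concat huy.symm with hR
  have hRpath : R.IsPath := by
    rw [hR, ← SimpleGraph.Walk.isPath_reverse_iff, SimpleGraph.Walk.reverse_concat]
    refine SimpleGraph.Walk.IsPath.cons ?_ ?_
    · rwa [SimpleGraph.Walk.isPath_reverse_iff]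
    · rwa [SimpleGraph.Walk.support_reverse, List.mem_reverse]
  have hRedge : s(u, x) ∉ R.edges := by
    rw [hR, SimpleGraph.Walk.edges_concat, List.concat_eq_append, List.mem_append]
    rintro (h | h)
    · exact huP (P.fst_mem_support_of_mem_edges h)
    · simp only [List.mem_singleton] at h
      rcases Sym2.eq_iff.mp h with ⟨h1, h2⟩ | ⟨h1, h2⟩
      · exact hux.ne h2.symm
      · exact hxy h2
  refine ⟨SimpleGraph.Walk.cons hux R, ?_, ?_⟩
  · exact (SimpleGraph.Walk.cons_isCycle_iff R hux).mpr ⟨hRpath, hRedge⟩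
  · rw [SimpleGraph.Walk.length_cons, hR, SimpleGraph.Walk.length_concat]
    omega


lemma touch_mem_ball {G : SimpleGraph V} {v a b : V} {r : ℕ} (hadj : G.Adj a b)
    (ht : a ∈ gball G v r ∨ b ∈ gball G v r) (hle : G.dist v b ≤ G.dist v a) :
    a ∈ gball G v (r+1) := by
  rcases ht with h | h
  · exact gball_mono (Nat.le_succ r) h
  · rw [mem_gball] at h ⊢
    refine ⟨h.1.trans ⟨SimpleGraph.Walk.cons hadj.symm SimpleGraph.Walk.nil⟩, ?_⟩
    have := dist_adj_le h.1 hadj.symm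
    omega

lemma touch_reach {G : SimpleGraph V} {v a b : V} {r : ℕ} (hadj : G.Adj a b)
    (ht : a ∈ gball G v r ∨ b ∈ gball G v r) : G.Reachable v a := by
  rcases ht with h | h
  · exact (mem_gball.mp h).1
  · exact (mem_gball.mp h).1.trans ⟨SimpleGraph.Walk.cons hadj.symm SimpleGraph.Walk.nil⟩

lemma touch_dist_le {G : SimpleGraph V} {v a b : V} {r : ℕ}
    (ht : a ∈ gball G v r ∨ b ∈ gball G v r) (hle : G.dist v a ≤ G.dist v b) :
    G.dist v a ≤ r := by
  rcases ht with h | h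
  · exact (mem_gball.mp h).2
  · exact hle.trans (mem_gball.mp h).2

/-- If `G` has no cycle of length at most `2r+2`, the number of darts touching the ball of
radius `r` is at most twice the size of the ball of radius `r+1`. -/
lemma count_touch {G : SimpleGraph V} {v : V} {r : ℕ}
    (hnc : ∀ (u : V) (w : G.Walk u u), w.IsCycle → 2*r+2 < w.length) :
    Nat.card {d : G.Dart // d.fst ∈ gball G v r ∨ d.snd ∈ gball G v r}
      ≤ 2 * (gball G v (r+1)).card := by
  classical
  have key : ∀ d : {d : G.Dart // d.fst ∈ gball G v r ∨ d.snd ∈ gball G v r},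
      (G.dist v d.1.snd ≤ G.dist v d.1.fst → d.1.fst ∈ gball G v (r+1)) ∧
      (¬ (G.dist v d.1.snd ≤ G.dist v d.1.fst) → d.1.snd ∈ gball G v (r+1)) := by
    rintro ⟨d, hd⟩
    constructor
    · intro h; exact touch_mem_ball d.adj hd h
    · intro h
      exact touch_mem_ball d.adj.symm (Or.symm hd) (le_of_not_ge h)
  set f : {d : G.Dart // d.fst ∈ gball G v r ∨ d.snd ∈ gball G v r} →
      ↥(gball G v (r+1)) × Bool := fun d =>
    if h : G.dist v d.1.snd ≤ G.dist v d.1.fst then (⟨d.1.fst, (key d).1 h⟩, true)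
    else (⟨d.1.snd, (key d).2 h⟩, false) with hf
  have hinj : Function.Injective f := by
    rintro ⟨d₁, hd₁⟩ ⟨d₂, hd₂⟩ heq
    by_contra hne
    have hdne : d₁ ≠ d₂ := fun h => hne (by simp [h])
    rw [hf] at heq
    by_cases h₁ : G.dist v d₁.snd ≤ G.dist v d₁.fst <;>
      by_cases h₂ : G.dist v d₂.snd ≤ G.dist v d₂.fst <;>
      simp only [h₁, h₂, dif_pos, dif_neg, not_false_iff, Prod.mk.injEq, Subtype.mk.injEq] at heq
    · -- both chose fst
      obtain ⟨hu, -⟩ := heq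
      -- u := d₁.fst = d₂.fst, x := d₁.snd, y := d₂.snd
      have hxy : d₁.snd ≠ d₂.snd := by
        intro h
        exact hdne (SimpleGraph.Dart.ext _ _ (Prod.ext hu h))
      have hrx : G.Reachable v d₁.snd := touch_reach d₁.adj.symm (Or.symm hd₁)
      have hry : G.Reachable v d₂.snd := touch_reach d₂.adj.symm (Or.symm hd₂)
      have hdistx : G.dist v d₁.snd ≤ r := touch_dist_le (Or.symm hd₁) h₁
      have hdisty : G.dist v d₂.snd ≤ r := touch_dist_le (Or.symm hd₂) h₂
      have hadj2 : G.Adj d₁.fst d₂.snd := hu ▸ d₂.adj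
      obtain ⟨w, hw, hwlen⟩ := cycle_of_two_edges d₁.adj hadj2 hxy hrx hry h₁ (hu ▸ h₂)
      have := hnc _ w hw
      omega
    · exact absurd heq.2 (by simp)
    · exact absurd heq.2 (by simp)
    · -- both chose snd
      obtain ⟨hu, -⟩ := heq
      have hxy : d₁.fst ≠ d₂.fst := by
        intro h
        exact hdne (SimpleGraph.Dart.ext _ _ (Prod.ext h hu))
      have hrx : G.Reachable v d₁.fst := touch_reach d₁.adj hd₁
      have hry : G.Reachable v d₂.fst := touch_reach d₂.adj hd₂
      have hdistx : G.dist v d₁.fst ≤ r := touch_dist_le hd₁ (le_of_not_ge h₁)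
      have hdisty : G.dist v d₂.fst ≤ r := touch_dist_le hd₂ (le_of_not_ge h₂)
      have hadj2 : G.Adj d₁.snd d₂.fst := hu ▸ d₂.adj.symm
      obtain ⟨w, hw, hwlen⟩ := cycle_of_two_edges d₁.adj.symm hadj2 hxy hrx hry
        (le_of_not_ge h₁) (hu ▸ le_of_not_ge h₂)
      have := hnc _ w hw
      omega
  calc Nat.card {d : G.Dart // d.fst ∈ gball G v r ∨ d.snd ∈ gball G v r}
      ≤ Nat.card (↥(gball G v (r+1)) × Bool) := Nat.card_le_card_of_injective f hinj
    _ = 2 * (gball G v (r+1)).card := by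
        simp [Nat.card_eq_fintype_card, Fintype.card_prod, Fintype.card_coe, mul_comm]

/-- Darts avoiding a set inject into the darts of the complementary induced subgraph. -/
lemma count_compl {G : SimpleGraph V} (s : Set V) :
    Nat.card {d : G.Dart // d.fst ∈ s ∧ d.snd ∈ s}
      ≤ Nat.card (G.induce s).Dart := by
  classical
  haveI : Finite (G.induce s).Dart := by
    apply Finite.of_injective (fun d : (G.induce s).Dart => d.toProd)
    exact SimpleGraph.Dart.toProd_injective
  set f : {d : G.Dart // d.fst ∈ s ∧ d.snd ∈ s} → (G.induce s).Dart := fun d =>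
    ⟨(⟨d.1.fst, d.2.1⟩, ⟨d.1.snd, d.2.2⟩), d.1.adj⟩ with hf
  apply Nat.card_le_card_of_injective f
  rintro ⟨d₁, h₁⟩ ⟨d₂, h₂⟩ heq
  rw [hf] at heq
  simp only [SimpleGraph.Dart.ext_iff, Prod.mk.injEq, Subtype.mk.injEq] at heq
  exact Subtype.ext (SimpleGraph.Dart.ext _ _ (Prod.ext heq.1 heq.2))

lemma card_dart_zero {G : SimpleGraph V} (h : Fintype.card V = 0) : Nat.card G.Dart = 0 := by
  haveI : IsEmpty V := Fintype.card_eq_zero_iff.mp h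
  haveI : IsEmpty G.Dart := ⟨fun d => IsEmpty.false d.fst⟩
  exact Nat.card_of_isEmpty

end ShortCycleAux

open ShortCycleAux in
lemma shc_claim (δ : ℝ) (hδ : 0 < δ) : ∀ (n : ℕ) (V : Type) [Fintype V] [DecidableEq V]
    (G : SimpleGraph V) (R : ℕ), Fintype.card V ≤ n → ((n : ℝ) < (1+δ)^R) →
    (∀ (u : V) (w : G.Walk u u), w.IsCycle → 2*R+2 < w.length) →
    (Nat.card G.Dart : ℝ) ≤ 2*(1+δ)*(Fintype.card V) := by
  intro n
  induction n with
  | zero =>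
    intro V _ _ G R hcard _ _
    have h0 : Fintype.card V = 0 := Nat.le_zero.mp hcard
    rw [card_dart_zero h0, h0]
    simp
  | succ n ih =>
    intro V _ _ G R hcard hpow hnc
    by_cases hV : Fintype.card V = 0
    · rw [card_dart_zero hV, hV]
      simp
    obtain ⟨v⟩ : Nonempty V := Fintype.card_pos_iff.mp (Nat.pos_of_ne_zero hV)
    classical
    set b : ℕ → ℕ := fun k => (gball G v k).card with hb
    have hstall : ∃ r, r < R ∧ ((b (r+1) : ℝ) < (1+δ) * b r) := by
      by_contra hno
      push_neg at hno
      have hgrow : ∀ k, k ≤ R → (1+δ)^k ≤ (b k : ℝ) := by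
        intro k
        induction k with
        | zero =>
          intro _
          have h1 : 1 ≤ b 0 := Finset.card_pos.mpr ⟨v, self_mem_gball G v 0⟩
          simpa using (by exact_mod_cast h1 : (1:ℝ) ≤ b 0)
        | succ k ihk =>
          intro hk
          have h1 := ihk (Nat.le_of_succ_le hk)
          have h2 := hno k (Nat.lt_of_succ_le hk)
          calc (1+δ)^(k+1) = (1+δ) * (1+δ)^k := by ring
            _ ≤ (1+δ) * b k := by nlinarith
            _ ≤ b (k+1) := h2
      have h3 : (b R : ℝ) ≤ Fintype.card V := by
        have := Finset.card_le_card (Finset.subset_univ (gball G v R))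
        rw [Finset.card_univ] at this
        exact_mod_cast this
      have h4 := hgrow R le_rfl
      have h5 : (Fintype.card V : ℝ) ≤ ((n+1 : ℕ) : ℝ) := by exact_mod_cast hcard
      linarith
    obtain ⟨r, hrR, hstall⟩ := hstall
    set s : Set V := (↑(gball G v r))ᶜ with hs
    have hApre : ∀ (u : V) (w : G.Walk u u), w.IsCycle → 2*r+2 < w.length := by
      intro u w hw
      have := hnc u w hw
      omega
    have hA := count_touch (v := v) hApre
    have hcompl0 := count_compl (G := G) s
    have hbridge : Nat.card {d : G.Dart // ¬ (d.fst ∈ gball G v r ∨ d.snd ∈ gball G v r)}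
        = Nat.card {d : G.Dart // d.fst ∈ s ∧ d.snd ∈ s} := by
      apply Nat.card_congr
      apply Equiv.subtypeEquivRight
      intro d
      simp [hs, not_or]
    have hsplit : Nat.card {d : G.Dart // d.fst ∈ gball G v r ∨ d.snd ∈ gball G v r}
        + Nat.card {d : G.Dart // ¬ (d.fst ∈ gball G v r ∨ d.snd ∈ gball G v r)}
        = Nat.card G.Dart := by
      simp only [Nat.card_eq_fintype_card]
      rw [← Fintype.card_sum]
      exact Fintype.card_congr (Equiv.sumCompl _)
    have hcardsplit : (gball G v r).card + Nat.card ↥s = Fintype.card V := by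
      have h1 : Nat.card ↥s = Set.ncard s := Nat.card_coe_set_eq s
      have h2 : Set.ncard (↑(gball G v r) : Set V) + Set.ncard s = Nat.card V := by
        rw [hs]
        exact Set.ncard_add_ncard_compl _
      rw [h1, ← Set.ncard_coe_finset (gball G v r), h2, Nat.card_eq_fintype_card]
    haveI : Fintype ↥s := Fintype.ofFinite _
    haveI : DecidableEq ↥s := Classical.decEq _
    have hns : Nat.card ↥s = Fintype.card ↥s := Nat.card_eq_fintype_card
    rw [hns] at hcardsplit
    have hC1 : 1 ≤ (gball G v r).card := Finset.card_pos.mpr ⟨v, self_mem_gball G v r⟩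
    have hcard_s : Fintype.card ↥s ≤ n := by omega
    have hpow' : ((n : ℕ) : ℝ) < (1+δ)^R := by
      refine lt_of_le_of_lt ?_ hpow
      exact_mod_cast Nat.cast_le.mpr (Nat.le_succ n)
    have hnc' : ∀ (u : ↥s) (w : (G.induce s).Walk u u), w.IsCycle → 2*R+2 < w.length := by
      intro u w hw
      have hinj : Function.Injective (SimpleGraph.Embedding.induce (G := G) s) :=
        (SimpleGraph.Embedding.induce (G := G) s).injective
      have := hnc _ (w.map (SimpleGraph.Embedding.induce (G := G) s).toHom) (hw.map hinj)
      rwa [SimpleGraph.Walk.length_map] at this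
    have hIH := ih ↥s (G.induce s) R hcard_s hpow' hnc'
    have e1 : (Nat.card {d : G.Dart // d.fst ∈ gball G v r ∨ d.snd ∈ gball G v r} : ℝ)
        ≤ 2 * ((1+δ) * b r) := by
      have h1 : (Nat.card {d : G.Dart // d.fst ∈ gball G v r ∨ d.snd ∈ gball G v r} : ℝ)
          ≤ (2 * b (r+1) : ℕ) := by exact_mod_cast hA
      have h2 : ((2 * b (r+1) : ℕ) : ℝ) = 2 * (b (r+1) : ℝ) := by push_cast; ring
      linarith
    have e2 : (Nat.card {d : G.Dart // ¬ (d.fst ∈ gball G v r ∨ d.snd ∈ gball G v r)} : ℝ)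
        ≤ 2*(1+δ)*(Fintype.card ↥s) := by
      rw [hbridge]
      refine le_trans ?_ hIH
      exact_mod_cast hcompl0
    have e3 : (Nat.card G.Dart : ℝ)
        = (Nat.card {d : G.Dart // d.fst ∈ gball G v r ∨ d.snd ∈ gball G v r} : ℝ)
        + (Nat.card {d : G.Dart // ¬ (d.fst ∈ gball G v r ∨ d.snd ∈ gball G v r)} : ℝ) := by
      exact_mod_cast hsplit.symm
    have e4 : ((b r : ℕ) : ℝ) + (Fintype.card ↥s : ℝ) = (Fintype.card V : ℝ) := by
      simp only [hb]
      exact_mod_cast hcardsplit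
    have expand : 2*(1+δ)*((b r : ℝ) + (Fintype.card ↥s : ℝ))
        = 2*((1+δ)*(b r : ℝ)) + 2*(1+δ)*(Fintype.card ↥s : ℝ) := by ring
    rw [e3, ← e4, expand]
    linarith

open Finset

/-- Consequence of the Moore bound of Alon, Hoory and Linial: for every `ε > 0`
there is `c = c(ε) > 0` such that every finite simple graph with `N ≥ 2`
vertices and at least `(1+ε)·N` edges contains a cycle of length at most
`c·log N`. -/
theorem exists_short_cycle (ε : ℝ) (hε : 0 < ε) :
    ∃ c : ℝ, 0 < c ∧
      ∀ (V : Type) [Fintype V] [DecidableEq V]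
        (G : SimpleGraph V) [DecidableRel G.Adj],
        2 ≤ Fintype.card V →
        (1 + ε) * Fintype.card V ≤ (G.edgeFinset.card : ℝ) →
        ∃ (v : V) (w : G.Walk v v), w.IsCycle ∧
          (w.length : ℝ) ≤ c * Real.log (Fintype.card V) := by
  have hδ : 0 < ε/2 := by linarith
  have hlog : 0 < Real.log (1+ε/2) := Real.log_pos (by linarith)
  have hlog2 : 0 < Real.log 2 := Real.log_pos (by norm_num)
  refine ⟨2/Real.log (1+ε/2) + 4/Real.log 2, ?_, ?_⟩
  · have := div_pos (by norm_num : (0:ℝ) < 2) hlog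
    have := div_pos (by norm_num : (0:ℝ) < 4) hlog2
    linarith
  intro V _ _ G _ hN hE
  set N := Fintype.card V with hNdef
  have hN2 : (2:ℝ) ≤ (N:ℝ) := by exact_mod_cast hN
  have hNpos : (0:ℝ) < (N:ℝ) := by linarith
  have hlogN : Real.log 2 ≤ Real.log N := Real.log_le_log (by norm_num) hN2
  set L := Real.log N / Real.log (1+ε/2) with hLdef
  have hL0 : 0 ≤ L := div_nonneg (by linarith) hlog.le
  set R := Nat.floor L + 1 with hRdef
  have hpow : ((N:ℕ):ℝ) < (1+ε/2)^R := by
    have h1 : L < (R:ℝ) := by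
      rw [hRdef]
      push_cast
      exact Nat.lt_floor_add_one L
    have h2 : Real.log N < (R:ℝ) * Real.log (1+ε/2) := by
      rw [hLdef, div_lt_iff₀ hlog] at h1
      exact h1
    have h3 : Real.log N < Real.log ((1+ε/2)^R) := by
      rw [Real.log_pow]
      exact h2
    exact (Real.log_lt_log_iff hNpos (pow_pos (by linarith) R)).mp h3
  by_contra hcon
  push_neg at hcon
  have hnc : ∀ (u : V) (w : G.Walk u u), w.IsCycle → 2*R+2 < w.length := by
    intro u w hw
    by_contra hle
    push_neg at hle
    have hcl := hcon u w hw
    have hbound : ((2*R+2 : ℕ) : ℝ) ≤ (2/Real.log (1+ε/2) + 4/Real.log 2) * Real.log N := by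
      have hR : (R:ℝ) ≤ L + 1 := by
        rw [hRdef]
        push_cast
        linarith [Nat.floor_le hL0]
      have c1 : 2/Real.log (1+ε/2) * Real.log N = 2*L := by
        rw [hLdef]
        field_simp
      have c2 : (4:ℝ) ≤ 4/Real.log 2 * Real.log N := by
        rw [div_mul_eq_mul_div, le_div_iff₀ hlog2]
        linarith
      have expand : (2/Real.log (1+ε/2) + 4/Real.log 2) * Real.log N
          = 2/Real.log (1+ε/2) * Real.log N + 4/Real.log 2 * Real.log N := by ring
      rw [hRdef]
      push_cast
      have hfl : (⌊L⌋₊ : ℝ) ≤ L := Nat.floor_le hL0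
      linarith
    have hlen : (w.length : ℝ) ≤ ((2*R+2:ℕ):ℝ) := by exact_mod_cast hle
    linarith
  have hclaim := shc_claim (ε/2) hδ N V G R le_rfl hpow hnc
  have hdart : Nat.card G.Dart = 2 * G.edgeFinset.card := by
    rw [Nat.card_eq_fintype_card]
    exact G.dart_card_eq_twice_card_edges
  have hfin : 2*(1+ε)*(N:ℝ) ≤ 2*(1+ε/2)*(N:ℝ) := by
    calc 2*(1+ε)*(N:ℝ) ≤ 2*(G.edgeFinset.card:ℝ) := by linarith
      _ = (Nat.card G.Dart : ℝ) := by rw [hdart]; push_cast; ring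
      _ ≤ 2*(1+ε/2)*(N:ℝ) := hclaim
  nlinarith
end

section
/- (Gilbert–Varshamov existence of asymptotically good codes.) For every δ ∈ (0, 1/2) and every ε > 0, for all sufficiently large N there exists a binary linear code C ⊆ F_2^N with dim C ≥ (1 − H(δ) − ε)·N and dist(C) ≥ δ·N, where H(δ) = −δ·log₂δ − (1−δ)·log₂(1−δ) is the binary entropy function. In particular, there exist families of asymptotically good binary linear codes. -/
open Finset Module

/-- The binary entropy function `H(δ) = −δ·log₂ δ − (1−δ)·log₂(1−δ)`. -/
noncomputable def binaryEntropy (δ : ℝ) : ℝ :=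
  -δ * Real.logb 2 δ - (1 - δ) * Real.logb 2 (1 - δ)

lemma zmod2_eq_of_ne_iff : ∀ a b : ZMod 2, (a ≠ 0 ↔ b ≠ 0) → a = b := by decide

lemma ball_card_le (N r : ℕ) :
    (Finset.univ.filter fun y : Fin N → ZMod 2 => hammingNorm y ≤ r).card
      ≤ ∑ i ∈ Finset.range (r + 1), N.choose i := by
  classical
  have key : (Finset.univ.filter fun y : Fin N → ZMod 2 => hammingNorm y ≤ r).card
      ≤ ((Finset.range (r + 1)).biUnion fun i =>
          Finset.powersetCard i (Finset.univ : Finset (Fin N))).card := by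
    apply Finset.card_le_card_of_injOn (fun y => Finset.univ.filter fun i => y i ≠ 0)
    · intro y hy
      simp only [Finset.mem_coe, Finset.mem_filter, Finset.mem_univ, true_and] at hy
      simp only [Finset.mem_coe, Finset.mem_biUnion, Finset.mem_range, Finset.mem_powersetCard_univ]
      exact ⟨(Finset.univ.filter fun i => y i ≠ 0).card, by
        simpa [hammingNorm] using Nat.lt_succ_of_le (by simpa [hammingNorm] using hy), rfl⟩
    · intro x _ y _ hxy
      funext i
      have := Finset.ext_iff.mp hxy i
      simp only [Finset.mem_filter, Finset.mem_univ, true_and] at this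
      exact zmod2_eq_of_ne_iff _ _ this
  refine key.trans ?_
  refine (Finset.card_biUnion_le).trans ?_
  apply Finset.sum_le_sum
  intro i _
  simp [Finset.card_powersetCard]



lemma sum_choose_le_rpow (N : ℕ) (δ : ℝ) (hδ0 : 0 < δ) (hδ2 : δ < 1/2) :
    ((∑ i ∈ Finset.range (⌊δ * N⌋₊ + 1), N.choose i : ℕ) : ℝ)
      ≤ (2 : ℝ) ^ (binaryEntropy δ * N) := by
  set r := ⌊δ * N⌋₊ with hr
  have hδ1 : δ < 1 := by linarith
  have hq0 : (0:ℝ) < 1 - δ := by linarith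
  have hrN : r ≤ N := by
    have : δ * N ≤ N := by nlinarith [Nat.cast_nonneg (α := ℝ) N]
    exact_mod_cast (Nat.floor_le_floor this).trans (by simp)
  -- the key term bound
  have hterm : ∀ i ∈ Finset.range (r + 1),
      (N.choose i : ℝ) * ((2:ℝ) ^ (-(binaryEntropy δ * N)))
        ≤ (N.choose i : ℝ) * (δ ^ i * (1 - δ) ^ (N - i)) := by
    intro i hi
    have hiN : i ≤ N := le_trans (Nat.lt_succ_iff.mp (Finset.mem_range.mp hi)) hrN
    have hiδ : (i : ℝ) ≤ δ * N := by
      exact_mod_cast (Nat.le_floor_iff (by positivity)).mp (Nat.lt_succ_iff.mp (Finset.mem_range.mp hi))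
    apply mul_le_mul_of_nonneg_left _ (Nat.cast_nonneg _)
    have hfrac : δ / (1 - δ) ≤ 1 := by
      rw [div_le_one hq0]; linarith
    have hfrac0 : 0 < δ / (1 - δ) := div_pos hδ0 hq0
    have h1 : δ ^ i * (1 - δ) ^ (N - i) = (1 - δ) ^ (N:ℝ) * (δ / (1 - δ)) ^ (i:ℝ) := by
      rw [Real.div_rpow hδ0.le hq0.le]
      simp only [Real.rpow_natCast]
      have hsplit : (1-δ)^N = (1-δ)^(N-i) * (1-δ)^i := by
        rw [← pow_add]; congr 1; omega
      rw [hsplit]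
      field_simp
    have h2 : (1 - δ) ^ (N:ℝ) * (δ / (1 - δ)) ^ (δ * N)
        ≤ (1 - δ) ^ (N:ℝ) * (δ / (1 - δ)) ^ (i:ℝ) :=
      mul_le_mul_of_nonneg_left
        (Real.rpow_le_rpow_of_exponent_ge hfrac0 hfrac hiδ)
        (Real.rpow_nonneg hq0.le _)
    have h3 : (1 - δ) ^ (N:ℝ) * (δ / (1 - δ)) ^ (δ * N)
        = (2:ℝ) ^ (-(binaryEntropy δ * N)) := by
      rw [Real.rpow_def_of_pos hq0, Real.rpow_def_of_pos hfrac0,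
        Real.rpow_def_of_pos (by norm_num : (0:ℝ) < 2), ← Real.exp_add]
      congr 1
      rw [Real.log_div (ne_of_gt hδ0) (ne_of_gt hq0)]
      unfold binaryEntropy
      rw [Real.logb, Real.logb]
      have hl2 : Real.log 2 ≠ 0 := ne_of_gt (Real.log_pos (by norm_num))
      field_simp
      ring
    rw [h1]
    calc (2:ℝ) ^ (-(binaryEntropy δ * N)) = _ := h3.symm
    _ ≤ _ := h2
  have hsum : ∑ i ∈ Finset.range (r + 1), (N.choose i : ℝ) * (δ ^ i * (1 - δ) ^ (N - i)) ≤ 1 := by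
    have hfull : ∑ i ∈ Finset.range (N + 1), δ ^ i * (1 - δ) ^ (N - i) * (N.choose i : ℝ) = 1 := by
      rw [← add_pow]; norm_num
    calc ∑ i ∈ Finset.range (r + 1), (N.choose i : ℝ) * (δ ^ i * (1 - δ) ^ (N - i))
        = ∑ i ∈ Finset.range (r + 1), δ ^ i * (1 - δ) ^ (N - i) * (N.choose i : ℝ) := by
          apply Finset.sum_congr rfl; intros; ring
      _ ≤ ∑ i ∈ Finset.range (N + 1), δ ^ i * (1 - δ) ^ (N - i) * (N.choose i : ℝ) := by
          apply Finset.sum_le_sum_of_subset_of_nonneg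
          · exact Finset.range_subset_range.mpr (by omega)
          · intro i _ _; positivity
      _ = 1 := hfull
  have h2pos : (0:ℝ) < (2:ℝ) ^ (-(binaryEntropy δ * N)) := Real.rpow_pos_of_pos (by norm_num) _
  have := (Finset.sum_le_sum hterm).trans hsum
  rw [← Finset.sum_mul] at this
  push_cast
  have h2 : (∑ i ∈ Finset.range (r+1), (N.choose i : ℝ)) ≤ 1 / (2:ℝ) ^ (-(binaryEntropy δ * N)) :=
    (le_div_iff₀ h2pos).mpr this
  rwa [one_div, ← Real.rpow_neg (by norm_num : (0:ℝ) ≤ 2), neg_neg] at h2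

lemma zmod2_cases (a : ZMod 2) : a = 0 ∨ a = 1 := by revert a; decide

lemma gv_greedy (N r k : ℕ)
    (hV : 2 ^ k * (∑ i ∈ Finset.range (r + 1), N.choose i) ≤ 2 ^ N) :
    ∃ C : Submodule (ZMod 2) (Fin N → ZMod 2),
      finrank (ZMod 2) C = k ∧ ∀ w ∈ C, w ≠ 0 → r < hammingNorm w := by
  classical
  induction k with
  | zero =>
    refine ⟨⊥, finrank_bot _ _, ?_⟩
    intro w hw hw0
    exact absurd (Submodule.mem_bot _ |>.mp hw) hw0
  | succ k ih =>
    have hV' : 2 ^ k * (∑ i ∈ Finset.range (r + 1), N.choose i) ≤ 2 ^ N := by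
      refine le_trans ?_ hV
      exact Nat.mul_le_mul_right _ (Nat.pow_le_pow_right (by norm_num) (by omega))
    obtain ⟨C, hCrank, hCdist⟩ := ih hV'
    -- the union of balls around codewords
    set V := ∑ i ∈ Finset.range (r + 1), N.choose i with hVdef
    have hV1 : 1 ≤ V := by
      have : 1 ∈ Finset.range (r+1) → True := fun _ => trivial
      calc 1 = N.choose 0 := (Nat.choose_zero_right N).symm
        _ ≤ V := Finset.single_le_sum (f := fun i => N.choose i)
            (fun i _ => Nat.zero_le _) (Finset.mem_range.mpr (by omega))
    set CF := (Finset.univ.filter fun c : Fin N → ZMod 2 => c ∈ C) with hCF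
    set U := CF.biUnion (fun c => Finset.univ.filter fun y => hammingDist y c ≤ r) with hU
    have hCFcard : CF.card = 2 ^ k := by
      rw [hCF, ← Fintype.card_subtype, ← hCrank]
      exact (card_eq_pow_finrank (K := ZMod 2) (V := ↥C)).trans (by norm_num)
    have hball : ∀ c : Fin N → ZMod 2,
        (Finset.univ.filter fun y => hammingDist y c ≤ r).card ≤ V := by
      intro c
      have : (Finset.univ.filter fun y : Fin N → ZMod 2 => hammingDist y c ≤ r).card
          = (Finset.univ.filter fun y : Fin N → ZMod 2 => hammingNorm y ≤ r).card := by
        apply Finset.card_bij' (fun y _ => y - c) (fun y _ => y + c)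
        · intro y hy
          simp only [Finset.mem_filter, Finset.mem_univ, true_and] at hy ⊢
          rwa [hammingDist_comm, hammingDist_eq_hammingNorm, neg_add_eq_sub] at hy
        · intro y hy
          simp only [Finset.mem_filter, Finset.mem_univ, true_and] at hy ⊢
          rwa [hammingDist_comm, hammingDist_eq_hammingNorm, show -c + (y + c) = y by abel]
        · intro y _; simp
        · intro y _; simp
      rw [this]; exact ball_card_le N r
    have hUcard : U.card < 2 ^ N := by
      have h1 : U.card ≤ 2 ^ k * V := by
        calc U.card ≤ ∑ c ∈ CF, (Finset.univ.filter fun y => hammingDist y c ≤ r).card :=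
              Finset.card_biUnion_le
          _ ≤ ∑ _c ∈ CF, V := Finset.sum_le_sum fun c _ => hball c
          _ = 2 ^ k * V := by rw [Finset.sum_const, hCFcard, smul_eq_mul]
      have : 2 ^ k * V < 2 ^ (k+1) * V := by
        have : 2 ^ k < 2 ^ (k+1) := Nat.pow_lt_pow_right (by norm_num) (by omega)
        exact Nat.mul_lt_mul_of_lt_of_le this (le_refl V) (by omega)
      omega
    -- find a point outside all balls
    have : ¬ ((Finset.univ : Finset (Fin N → ZMod 2)) ⊆ U) := by
      intro hsub
      have := Finset.card_le_card hsub
      rw [Finset.card_univ] at this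
      simp only [Fintype.card_pi, Fintype.card_fin, ZMod.card, Finset.prod_const,
        Finset.card_univ, Fintype.card_fin] at this
      omega
    obtain ⟨x, -, hx⟩ := Finset.not_subset.mp this
    have hxfar : ∀ c ∈ C, r < hammingDist x c := by
      intro c hc
      by_contra h
      exact hx (Finset.mem_biUnion.mpr ⟨c, Finset.mem_filter.mpr ⟨Finset.mem_univ _, hc⟩,
        Finset.mem_filter.mpr ⟨Finset.mem_univ _, by omega⟩⟩)
    have hxC : x ∉ C := fun hxC => by
      have := hxfar x hxC
      simp at this
    have hx0 : x ≠ 0 := fun h => hxC (h ▸ C.zero_mem)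
    refine ⟨C ⊔ Submodule.span (ZMod 2) {x}, ?_, ?_⟩
    · have hinf : C ⊓ Submodule.span (ZMod 2) {x} = ⊥ := by
        rw [eq_bot_iff]
        rintro y ⟨hyC, hyx⟩
        obtain ⟨a, rfl⟩ := Submodule.mem_span_singleton.mp hyx
        rcases zmod2_cases a with ha | ha
        · simp [ha]
        · rw [ha, one_smul] at hyC; exact absurd hyC hxC
      have := Submodule.finrank_sup_add_finrank_inf_eq C (Submodule.span (ZMod 2) {x})
      rw [hinf, finrank_bot, add_zero, hCrank, finrank_span_singleton hx0] at this
      omega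
    · intro w hw hw0
      obtain ⟨y, hy, z, hz, rfl⟩ := Submodule.mem_sup.mp hw
      obtain ⟨a, rfl⟩ := Submodule.mem_span_singleton.mp hz
      rcases zmod2_cases a with ha | ha
      · rw [ha, zero_smul, add_zero] at hw0 ⊢
        exact hCdist y hy hw0
      · rw [ha, one_smul]
        have hyC : -y ∈ C := C.neg_mem hy
        have := hxfar (-y) hyC
        rwa [hammingDist_comm, hammingDist_eq_hammingNorm, neg_neg] at this

lemma gv_first (δ ε : ℝ) (hδ0 : 0 < δ) (hδ2 : δ < 1 / 2) (hε : 0 < ε) :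
    ∃ N₀ : ℕ, ∀ N : ℕ, N₀ ≤ N →
      ∃ C : Submodule (ZMod 2) (Fin N → ZMod 2),
        (1 - binaryEntropy δ - ε) * N ≤ (finrank (ZMod 2) C : ℝ) ∧
        ∀ w ∈ C, w ≠ 0 → δ * N ≤ (hammingNorm w : ℝ) := by
  refine ⟨⌈1/ε⌉₊ + 1, fun N hN => ?_⟩
  have hNε : 1 ≤ ε * N := by
    have h1 : (1:ℝ)/ε ≤ (⌈1/ε⌉₊ : ℝ) := Nat.le_ceil _
    have h2 : ((⌈1/ε⌉₊ + 1 : ℕ) : ℝ) ≤ (N : ℝ) := by exact_mod_cast hN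
    push_cast at h2
    have : 1/ε ≤ (N:ℝ) := by linarith
    rw [div_le_iff₀ hε] at this
    nlinarith
  set r := ⌊δ * N⌋₊ with hr
  -- the distance conclusion holds for any code with min weight > r
  have hdist : ∀ (w : Fin N → ZMod 2), r < hammingNorm w → δ * N ≤ (hammingNorm w : ℝ) := by
    intro w hw
    have h1 : δ * N < (r : ℝ) + 1 := Nat.lt_floor_add_one _
    have h2 : (r : ℝ) + 1 ≤ (hammingNorm w : ℝ) := by exact_mod_cast hw
    linarith
  by_cases hx : (1 - binaryEntropy δ - ε) * N ≤ 0
  · refine ⟨⊥, ?_, ?_⟩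
    · rw [finrank_bot]; exact hx.trans (by norm_num)
    · intro w hw hw0
      exact absurd (Submodule.mem_bot _ |>.mp hw) hw0
  · push_neg at hx
    set x := (1 - binaryEntropy δ - ε) * N with hxdef
    set k := ⌈x⌉₊ with hk
    have hkx : (k : ℝ) < x + 1 := Nat.ceil_lt_add_one hx.le
    have hHN : (k : ℝ) + binaryEntropy δ * N ≤ N := by
      have : x + 1 ≤ (1 - binaryEntropy δ) * N := by
        rw [hxdef]; nlinarith
      nlinarith
    have hbound : 2 ^ k * (∑ i ∈ Finset.range (r + 1), N.choose i) ≤ 2 ^ N := by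
      have hreal : ((2 ^ k * (∑ i ∈ Finset.range (r + 1), N.choose i) : ℕ) : ℝ)
          ≤ ((2 ^ N : ℕ) : ℝ) := by
        push_cast
        calc (2:ℝ) ^ k * ((∑ i ∈ Finset.range (r + 1), (N.choose i:ℝ)))
            ≤ (2:ℝ) ^ k * (2:ℝ) ^ (binaryEntropy δ * N) := by
              apply mul_le_mul_of_nonneg_left _ (by positivity)
              have := sum_choose_le_rpow N δ hδ0 hδ2
              push_cast at this
              exact this
          _ = (2:ℝ) ^ ((k:ℝ) + binaryEntropy δ * N) := by
              rw [Real.rpow_add (by norm_num), Real.rpow_natCast]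
          _ ≤ (2:ℝ) ^ ((N:ℝ)) := by
              exact Real.rpow_le_rpow_of_exponent_le (by norm_num) hHN
          _ = (2:ℝ) ^ N := Real.rpow_natCast 2 N
      exact_mod_cast hreal
    obtain ⟨C, hCrank, hC⟩ := gv_greedy N r k hbound
    refine ⟨C, ?_, fun w hw hw0 => hdist w (hC w hw hw0)⟩
    rw [hCrank]
    exact_mod_cast Nat.le_ceil x

lemma H14_lt_one : binaryEntropy (1/4) < 1 := by
  have hlog2 : 0 < Real.log 2 := Real.log_pos (by norm_num)
  have heq : binaryEntropy (1/4) = Real.binEntropy (1/4) / Real.log 2 := by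
    unfold binaryEntropy Real.binEntropy Real.logb
    rw [Real.log_inv, Real.log_inv]
    field_simp
    ring
  rw [heq, div_lt_one hlog2]
  exact Real.binEntropy_lt_log_two.mpr (by norm_num)

lemma gv_second :
    ∃ r₀ δ₀ : ℝ, 0 < r₀ ∧ 0 < δ₀ ∧
      ∃ Ni : ℕ → ℕ, Filter.Tendsto Ni Filter.atTop Filter.atTop ∧
        ∀ i : ℕ, ∃ C : Submodule (ZMod 2) (Fin (Ni i) → ZMod 2),
          r₀ * Ni i ≤ (finrank (ZMod 2) C : ℝ) ∧
          ∀ w ∈ C, w ≠ 0 → δ₀ * Ni i ≤ (hammingNorm w : ℝ) := by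
  have h1 := H14_lt_one
  set ε := (1 - binaryEntropy (1/4)) / 2 with hε
  have hε0 : 0 < ε := by rw [hε]; linarith
  obtain ⟨N₀, hN₀⟩ := gv_first (1/4) ε (by norm_num) (by norm_num) hε0
  refine ⟨ε, 1/4, hε0, by norm_num, fun i => N₀ + i, ?_, fun i => ?_⟩
  · exact Filter.tendsto_atTop_mono (fun i => Nat.le_add_left i N₀) Filter.tendsto_id
  · obtain ⟨C, hC1, hC2⟩ := hN₀ (N₀ + i) (Nat.le_add_right _ _)
    refine ⟨C, ?_, hC2⟩
    have : 1 - binaryEntropy (1/4) - ε = ε := by rw [hε]; ring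
    rwa [this] at hC1

/-- Gilbert–Varshamov existence of asymptotically good binary linear codes:
for every `δ ∈ (0, 1/2)` and `ε > 0`, for all sufficiently large `N` there is a
binary linear code `C ⊆ F₂^N` with `dim C ≥ (1 − H(δ) − ε)·N` and
`dist(C) ≥ δ·N`. In particular, there exists a family of binary linear codes
`C_i ⊆ F₂^{N_i}` with `N_i → ∞` whose rates and relative distances are bounded
below by positive constants, i.e. an asymptotically good family. -/
theorem gilbert_varshamov :
    (∀ δ ε : ℝ, 0 < δ → δ < 1 / 2 → 0 < ε →
      ∃ N₀ : ℕ, ∀ N : ℕ, N₀ ≤ N →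
        ∃ C : Submodule (ZMod 2) (Fin N → ZMod 2),
          (1 - binaryEntropy δ - ε) * N ≤ (finrank (ZMod 2) C : ℝ) ∧
          ∀ w ∈ C, w ≠ 0 → δ * N ≤ (hammingNorm w : ℝ)) ∧
    ∃ r₀ δ₀ : ℝ, 0 < r₀ ∧ 0 < δ₀ ∧
      ∃ Ni : ℕ → ℕ, Filter.Tendsto Ni Filter.atTop Filter.atTop ∧
        ∀ i : ℕ, ∃ C : Submodule (ZMod 2) (Fin (Ni i) → ZMod 2),
          r₀ * Ni i ≤ (finrank (ZMod 2) C : ℝ) ∧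
          ∀ w ∈ C, w ≠ 0 → δ₀ * Ni i ≤ (hammingNorm w : ℝ) := by
  exact ⟨gv_first, gv_second⟩
end
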